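/- Let G be a pro-p group of type FP_∞ over Z_p with finite cd_p, and let {U_i} be a descending sequence of open subgroups. Suppose that for each j ≥ 3, lim_i dim_{F_p} H_j(U_i, F_p)/[G : U_i] = 0, and that [G : U_i] → ∞. Then lim_i (dim_{F_p} H_1(U_i, F_p) − dim_{F_p} H_2(U_i, F_p))/[G : U_i] = −χ_p(G), where χ_p(G) = Σ_j (−1)^j dim_{F_p} H_j(G, F_p). -/

import Mathlib

open Filter Topology

/-- Theorem C(2)-type statement: let `G` be a pro-`p` group of type `FP_∞`
over `ℤ_p` with finite `cd_p`, and `{U i}` a descending sequence of open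
subgroups.  Write `hdim j V` for `dim_{F_p} H_j(V, F_p)` (so `hdim 0 V = 1`,
`hdim j V = 0` for `j > cd_p`) and
`χ_p(V) = Σ_j (−1)^j hdim j V`, which is multiplicative on open subgroups.
If `dim H_j(U i, F_p)/[G : U i] → 0` for every `j ≥ 3` and `[G : U i] → ∞`,
then `(dim H₁(U i, F_p) − dim H₂(U i, F_p))/[G : U i] → −χ_p(G)`. -/
theorem limit_L_eq_neg_euler_char
    (G : Type) [Group G] [TopologicalSpace G] [IsTopologicalGroup G]
    [CompactSpace G] [TotallyDisconnectedSpace G]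
    (p : ℕ) [Fact p.Prime]
    (cd : ℕ) (hdim : ℕ → Subgroup G → ℕ)
    (h0 : ∀ V : Subgroup G, hdim 0 V = 1)
    (hvan : ∀ (V : Subgroup G) (j : ℕ), cd < j → hdim j V = 0)
    (U : ℕ → Subgroup G) (hUopen : ∀ i, IsOpen (U i : Set G))
    (hUdesc : ∀ i, U (i + 1) ≤ U i)
    (hmult : ∀ i, (∑ j ∈ Finset.range (cd + 1), (-1 : ℤ) ^ j * hdim j (U i))
      = ((U i).index : ℤ) * ∑ j ∈ Finset.range (cd + 1), (-1 : ℤ) ^ j * hdim j ⊤)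
    (hhigh : ∀ j ≥ 3, Tendsto
      (fun i => (hdim j (U i) : ℝ) / ((U i).index : ℝ)) atTop (𝓝 0))
    (hindex : Tendsto (fun i => ((U i).index : ℝ)) atTop atTop) :
    Tendsto (fun i => ((hdim 1 (U i) : ℝ) - (hdim 2 (U i) : ℝ)) / ((U i).index : ℝ))
      atTop
      (𝓝 (-(∑ j ∈ Finset.range (cd + 1), (-1 : ℤ) ^ j * hdim j ⊤ : ℤ))) := by
  set M := max (cd + 1) 3 with hM
  set χ : ℤ := ∑ j ∈ Finset.range (cd + 1), (-1 : ℤ) ^ j * hdim j ⊤ with hχ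
  have h3le : 3 ≤ M := le_max_right _ _
  have hext : ∀ V : Subgroup G,
      (∑ j ∈ Finset.range M, (-1 : ℤ) ^ j * hdim j V)
        = ∑ j ∈ Finset.range (cd + 1), (-1 : ℤ) ^ j * hdim j V := by
    intro V
    symm
    apply Finset.sum_subset (Finset.range_subset_range.2 (le_max_left _ _))
    intro j hj hj'
    have : cd < j := by
      simp only [Finset.mem_range, not_lt] at hj'
      omega
    simp [hvan V j this]
  have key : ∀ᶠ i in atTop,
      ((hdim 1 (U i) : ℝ) - (hdim 2 (U i) : ℝ)) / ((U i).index : ℝ)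
        = (1 + ∑ j ∈ Finset.Ico 3 M, (-1 : ℝ) ^ j * hdim j (U i)) / ((U i).index : ℝ)
          - χ := by
    filter_upwards [hindex.eventually_ge_atTop 1] with i hi
    have hn : ((U i).index : ℝ) ≠ 0 := by linarith
    have h1 : (∑ j ∈ Finset.range M, (-1 : ℤ) ^ j * hdim j (U i))
        = ((U i).index : ℤ) * χ := by rw [hext]; exact hmult i
    rw [Finset.range_eq_Ico, ← Finset.sum_Ico_consecutive _ (by omega : 0 ≤ 3) h3le,
      ← Finset.range_eq_Ico] at h1
    have hlow : (∑ j ∈ Finset.range 3, (-1 : ℤ) ^ j * hdim j (U i))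
        = 1 - hdim 1 (U i) + hdim 2 (U i) := by
      rw [Finset.sum_range_succ, Finset.sum_range_succ, Finset.sum_range_one, h0]
      ring
    rw [hlow] at h1
    have h1R := congrArg (fun z : ℤ => (z : ℝ)) h1
    push_cast at h1R
    field_simp
    linarith [h1R]
  refine Tendsto.congr' (Filter.EventuallyEq.symm key) ?_
  have hzero : Tendsto (fun i =>
      (1 + ∑ j ∈ Finset.Ico 3 M, (-1 : ℝ) ^ j * hdim j (U i)) / ((U i).index : ℝ))
      atTop (𝓝 0) := by
    have heq : ∀ i, (1 + ∑ j ∈ Finset.Ico 3 M, (-1 : ℝ) ^ j * hdim j (U i))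
        / ((U i).index : ℝ)
        = 1 / ((U i).index : ℝ)
          + ∑ j ∈ Finset.Ico 3 M, (-1 : ℝ) ^ j * ((hdim j (U i) : ℝ) / ((U i).index : ℝ)) := by
      intro i
      rw [add_div, Finset.sum_div]
      congr 1
      refine Finset.sum_congr rfl fun j _ => ?_
      ring
    simp only [heq]
    have hs : Tendsto (fun i => ∑ j ∈ Finset.Ico 3 M,
        (-1 : ℝ) ^ j * ((hdim j (U i) : ℝ) / ((U i).index : ℝ))) atTop (𝓝 0) := by
      have : (0 : ℝ) = ∑ j ∈ Finset.Ico 3 M, (0 : ℝ) := by simp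
      rw [this]
      refine tendsto_finset_sum _ fun j hj => ?_
      have hj3 : 3 ≤ j := (Finset.mem_Ico.1 hj).1
      simpa using (hhigh j hj3).const_mul ((-1 : ℝ) ^ j)
    have h1n : Tendsto (fun i => 1 / ((U i).index : ℝ)) atTop (𝓝 0) := by
      simpa [one_div, Pi.inv_def] using hindex.inv_tendsto_atTop
    simpa using h1n.add hs
  have := hzero.sub_const (χ : ℝ)
  rw [zero_sub] at this
  exact this
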